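/- The graph Δ₂ obtained from Γ[K₂] by dual Seidel switching with respect to φ̃ — the simple graph on V × ZMod 2 with (u,i) adjacent to (v,j) iff (r(u),i) ≠ (v,j) and (r(u) = v or r(u) is adjacent to v in Γ) — is a well-defined simple graph (the relation is symmetric and irreflexive) and is a strictly Deza graph with parameters (486,45,44,4): it is 45-regular, any two distinct vertices have exactly 44 or exactly 4 common neighbours, it has diameter 2, and it is not strongly regular. -/

import Mathlib

open SimpleGraph Polynomial Matrix

/-- `V` is the 5-dimensional vector space over `GF(3)`. -/
abbrev V : Type := Fin 5 → ZMod 3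

/-- The specific parity-check matrix of the ternary Golay code. -/
def H : Matrix (Fin 5) (Fin 11) (ZMod 3) :=
  !![1,1,1,2,2,0,1,0,0,0,0;
     1,1,2,1,0,2,0,1,0,0,0;
     1,2,1,0,1,2,0,0,1,0,0;
     1,2,0,1,2,1,0,0,0,1,0;
     1,0,2,2,1,1,0,0,0,0,1]

/-- `S₂ = {±x₁, …, ±x₁₁}` where `x₁, …, x₁₁` are the columns of `H`. -/
def S2 : Set V := {v | ∃ j : Fin 11, v = (fun i => H i j) ∨ v = -(fun i => H i j)}

instance : DecidablePred (· ∈ S2) := fun v =>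
  decidable_of_iff (∃ j : Fin 11, v = (fun i => H i j) ∨ v = -(fun i => H i j)) Iff.rfl

/-- The reversal map sending `(a,b,c,d,e)` to `(e,d,c,b,a)`. -/
def r (v : V) : V := fun i => v i.rev

/-- The Berlekamp–Van Lint–Seidel graph `Γ = Cay(V, S₂)`:
`u` is adjacent to `v` iff `u ≠ v` and `u - v ∈ S₂`. -/
def Γ : SimpleGraph V where
  Adj u v := u ≠ v ∧ u - v ∈ S2
  symm := ⟨by
    rintro u v ⟨hne, j, hj⟩
    refine ⟨hne.symm, j, ?_⟩
    rcases hj with h | h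
    · right; rw [← neg_sub, h]
    · left; rw [← neg_sub, h, neg_neg]⟩
  loopless := ⟨fun v h => h.1 rfl⟩

instance : DecidableRel Γ.Adj := fun u v =>
  decidable_of_iff (u ≠ v ∧ u - v ∈ S2) Iff.rfl

lemma r_r (v : V) : r (r v) = v := funext fun i => by simp [r, Fin.rev_rev]

lemma r_sub (a b : V) : r (a - b) = r a - r b := rfl

lemma S2_neg : ∀ v ∈ S2, -v ∈ S2 := by
  rintro v ⟨j, h | h⟩
  · exact ⟨j, Or.inr (by rw [h])⟩
  · exact ⟨j, Or.inl (by rw [h, neg_neg])⟩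

lemma S2_r : ∀ v ∈ S2, r v ∈ S2 := by
  have base : ∀ j : Fin 11, r (fun i => H i j) ∈ S2 := by decide
  rintro v ⟨j, h | h⟩
  · rw [h]; exact base j
  · rw [h]
    have hneg : r (-(fun i => H i j)) = -(r (fun i => H i j)) := rfl
    rw [hneg]; exact S2_neg _ (base j)

set_option maxRecDepth 40000 in
lemma sub_r_not_mem : ∀ v : V, v - r v ∉ S2 := by decide

/-- The graph `Δ₂` obtained from the strong product `Γ[K₂]` by dual Seidel switching with
respect to `φ̃(v,i) = (r v, i)`: `(u,i)` is adjacent to `(v,j)` iff `(r u, i) ≠ (v, j)` and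
(`r u = v` or `r u` is adjacent to `v` in `Γ`). -/
def Δ₂ : SimpleGraph (V × ZMod 2) where
  Adj p q := (r p.1, p.2) ≠ q ∧ (r p.1 = q.1 ∨ Γ.Adj (r p.1) q.1)
  symm := ⟨by
    rintro ⟨u, i⟩ ⟨v, j⟩ ⟨h1, h2⟩
    rcases h2 with h | h
    · subst h
      refine ⟨?_, Or.inl (r_r u)⟩
      intro hc
      apply h1
      have hj : j = i := (Prod.ext_iff.mp hc).2
      rw [hj]
    · obtain ⟨hne, hmem⟩ := h
      refine ⟨?_, Or.inr ⟨fun hh => hne (by rw [← hh, r_r]), ?_⟩⟩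
      · intro hc
        have h' : r v = u := (Prod.ext_iff.mp hc).1
        exact hne (by rw [← h', r_r])
      · have key : r v - u = -(r (r u - v)) := by
          rw [r_sub, r_r]; abel
        rw [key]
        exact S2_neg _ (S2_r _ hmem)⟩
  loopless := ⟨by
    rintro ⟨u, i⟩ ⟨h1, h2⟩
    rcases h2 with h | h
    · exact h1 (by rw [h])
    · obtain ⟨-, hmem⟩ := h
      exact sub_r_not_mem (r u) (by rw [r_r]; exact hmem)⟩

instance : DecidableRel Δ₂.Adj := fun p q =>
  decidable_of_iff ((r p.1, p.2) ≠ q ∧ (r p.1 = q.1 ∨ Γ.Adj (r p.1) q.1)) Iff.rfl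

/-! ### Auxiliary machinery -/

/-- The 22 generators of `S2`, indexed by column and sign. -/
def gen (p : Fin 11 × Bool) : V := if p.2 then -(fun i => H i p.1) else (fun i => H i p.1)

/-- Base-3 encoding of a vector as a natural number. -/
def enc (x : V) : ℕ :=
  (x 0).val + 3 * (x 1).val + 9 * (x 2).val + 27 * (x 3).val + 81 * (x 4).val

/-- The codes of the 22 elements of `S2`. -/
def S2codes : Finset ℕ :=
  {121, 76, 178, 194, 146, 132, 1, 3, 9, 27, 81, 242, 44, 104, 142, 208, 228, 2, 6, 18, 54, 162}

lemma enc_inj : ∀ {x y : V}, enc x = enc y → x = y := by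
  intro x y h
  have hx : ∀ i, (x i).val < 3 := fun i => ZMod.val_lt _
  have hy : ∀ i, (y i).val < 3 := fun i => ZMod.val_lt _
  unfold enc at h
  have h0 := hx 0; have h1 := hx 1; have h2 := hx 2; have h3 := hx 3; have h4 := hx 4
  have g0 := hy 0; have g1 := hy 1; have g2 := hy 2; have g3 := hy 3; have g4 := hy 4
  have e0 : (x 0).val = (y 0).val := by omega
  have e1 : (x 1).val = (y 1).val := by omega
  have e2 : (x 2).val = (y 2).val := by omega
  have e3 : (x 3).val = (y 3).val := by omega
  have e4 : (x 4).val = (y 4).val := by omega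
  funext i
  fin_cases i
  exacts [ZMod.val_injective 3 e0, ZMod.val_injective 3 e1, ZMod.val_injective 3 e2,
    ZMod.val_injective 3 e3, ZMod.val_injective 3 e4]

lemma vec_eta (v : V) : v = ![v 0, v 1, v 2, v 3, v 4] := by
  funext i; fin_cases i <;> rfl

lemma enc_zero : enc (0 : V) = 0 := rfl

set_option maxRecDepth 2000000 in
set_option maxHeartbeats 16000000 in
lemma keyN : ∀ a b c d e : ZMod 3, enc ![a,b,c,d,e] = 0 ∨
    ((Finset.univ : Finset (Fin 11 × Bool)).filter
        fun p => enc (gen p - ![a,b,c,d,e]) ∈ S2codes).card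
      = if enc ![a,b,c,d,e] ∈ S2codes then 1 else 2 := by decide

lemma keyN' (d : V) (hd : d ≠ 0) :
    ((Finset.univ : Finset (Fin 11 × Bool)).filter fun p => enc (gen p - d) ∈ S2codes).card
      = if enc d ∈ S2codes then 1 else 2 := by
  have h := keyN (d 0) (d 1) (d 2) (d 3) (d 4)
  rw [← vec_eta d] at h
  rcases h with h | h
  · exact absurd (enc_inj (h.trans enc_zero.symm)) hd
  · exact h

lemma mem_S2_iff_gen (x : V) : x ∈ S2 ↔ ∃ p : Fin 11 × Bool, x = gen p := by
  constructor
  · rintro ⟨j, h | h⟩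
    exacts [⟨(j, false), h⟩, ⟨(j, true), h⟩]
  · rintro ⟨⟨j, s⟩, h⟩
    cases s
    exacts [⟨j, Or.inl h⟩, ⟨j, Or.inr h⟩]

lemma gen_mem (p : Fin 11 × Bool) : gen p ∈ S2 := (mem_S2_iff_gen _).2 ⟨p, rfl⟩

lemma mem_S2_iff (x : V) : x ∈ S2 ↔ enc x ∈ S2codes := by
  have hgen : ∀ p : Fin 11 × Bool, enc (gen p) ∈ S2codes := by decide
  have hsur : ∀ n ∈ S2codes, ∃ p : Fin 11 × Bool, n = enc (gen p) := by decide
  constructor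
  · intro h
    obtain ⟨p, hp⟩ := (mem_S2_iff_gen x).1 h
    rw [hp]; exact hgen p
  · intro h
    obtain ⟨p, hp⟩ := hsur _ h
    exact (mem_S2_iff_gen x).2 ⟨p, enc_inj hp⟩

lemma zero_not_mem : (0 : V) ∉ S2 := fun h => absurd ((mem_S2_iff 0).1 h) (by decide)

lemma gen_inj : ∀ {p q : Fin 11 × Bool}, gen p = gen q → p = q := by
  have h : ∀ p q : Fin 11 × Bool, enc (gen p) = enc (gen q) → p = q := by decide
  intro p q hpq
  exact h p q (by rw [hpq])

lemma card_slice (a : V) :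
    (Finset.univ.filter fun w : V => a - w ∈ S2).card = 22 := by
  have h22 : ((Finset.univ : Finset (Fin 11 × Bool))).card = 22 := by decide
  rw [← h22]
  refine (Finset.card_bij (fun p _ => a - gen p) ?_ ?_ ?_).symm
  · intro p _
    simp only [Finset.mem_filter, Finset.mem_univ, true_and]
    have : a - (a - gen p) = gen p := by abel
    rw [this]; exact gen_mem p
  · intro p _ q _ h
    exact gen_inj (by rwa [sub_right_injective.eq_iff] at h)
  · intro w hw
    simp only [Finset.mem_filter, Finset.mem_univ, true_and] at hw
    obtain ⟨p, hp⟩ := (mem_S2_iff_gen _).1 hw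
    refine ⟨p, Finset.mem_univ p, ?_⟩
    show a - gen p = w
    rw [← hp]; abel

lemma card_pair (a b : V) (hab : a ≠ b) :
    (Finset.univ.filter fun w : V => a - w ∈ S2 ∧ b - w ∈ S2).card
      = if a - b ∈ S2 then 1 else 2 := by
  have hd : a - b ≠ 0 := sub_ne_zero_of_ne hab
  rw [if_congr (mem_S2_iff (a - b)) rfl rfl, ← keyN' (a - b) hd]
  refine (Finset.card_bij (fun p _ => a - gen p) ?_ ?_ ?_).symm
  · intro p hp
    simp only [Finset.mem_filter, Finset.mem_univ, true_and] at hp ⊢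
    constructor
    · have : a - (a - gen p) = gen p := by abel
      rw [this]; exact gen_mem p
    · have : b - (a - gen p) = gen p - (a - b) := by abel
      rw [this]; exact (mem_S2_iff _).2 hp
  · intro p _ q _ h
    exact gen_inj (by rwa [sub_right_injective.eq_iff] at h)
  · intro w hw
    simp only [Finset.mem_filter, Finset.mem_univ, true_and] at hw
    obtain ⟨p, hp⟩ := (mem_S2_iff_gen _).1 hw.1
    refine ⟨p, ?_, ?_⟩
    swap
    · show a - gen p = w
      rw [← hp]; abel
    simp only [Finset.mem_filter, Finset.mem_univ, true_and]
    have : gen p - (a - b) = b - w := by rw [← hp]; abel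
    rw [this]
    exact (mem_S2_iff _).1 hw.2

lemma card_fst (P : V → Prop) [DecidablePred P] :
    (Finset.univ.filter fun w : V × ZMod 2 => P w.1).card
      = 2 * (Finset.univ.filter P).card := by
  have h : (Finset.univ.filter fun w : V × ZMod 2 => P w.1)
      = (Finset.univ.filter P) ×ˢ (Finset.univ : Finset (ZMod 2)) := by
    ext ⟨w, k⟩
    simp [Finset.mem_product]
  rw [h, Finset.card_product]
  have : (Finset.univ : Finset (ZMod 2)).card = 2 := rfl
  rw [this, mul_comm]

lemma adj_iff (u v : V) (i j : ZMod 2) :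
    Δ₂.Adj (u, i) (v, j) ↔ (r u - v ∈ S2 ∨ (r u = v ∧ i ≠ j)) := by
  constructor
  · rintro ⟨hne, h | h⟩
    · exact Or.inr ⟨h, fun hij => hne (by rw [h, hij])⟩
    · exact Or.inl h.2
  · rintro (h | ⟨h1, h2⟩)
    · have hne : r u ≠ v := fun e => zero_not_mem (by rw [e, sub_self] at h; exact h)
      exact ⟨fun hc => hne (congrArg Prod.fst hc), Or.inr ⟨hne, h⟩⟩
    · exact ⟨fun hc => h2 (congrArg Prod.snd hc), Or.inl h1⟩

lemma zmod2_ne_iff : ∀ {i k : ZMod 2}, i ≠ k ↔ k = i + 1 := by decide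
lemma zmod2_trich : ∀ {i j k : ZMod 2}, i ≠ j → ¬(i ≠ k ∧ j ≠ k) := by decide

lemma deg (u : V) (i : ZMod 2) : Δ₂.degree (u, i) = 45 := by
  have hnf : Δ₂.neighborFinset (u, i) = Finset.univ.filter (fun w => Δ₂.Adj (u, i) w) := by
    rw [SimpleGraph.neighborFinset_eq_filter]
  have he : Finset.univ.filter (fun w => Δ₂.Adj (u, i) w)
      = (Finset.univ.filter fun w : V × ZMod 2 => r u - w.1 ∈ S2) ∪ {(r u, i + 1)} := by
    ext ⟨w, k⟩
    simp only [Finset.mem_filter, Finset.mem_univ, true_and, Finset.mem_union,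
      Finset.mem_singleton, adj_iff, Prod.mk.injEq]
    constructor
    · rintro (h | ⟨he, hik⟩)
      · exact Or.inl h
      · exact Or.inr ⟨he.symm, zmod2_ne_iff.mp hik⟩
    · rintro (h | ⟨hw, hk⟩)
      · exact Or.inl h
      · exact Or.inr ⟨hw.symm, zmod2_ne_iff.mpr hk⟩
  have hdisj : Disjoint (Finset.univ.filter fun w : V × ZMod 2 => r u - w.1 ∈ S2)
      ({(r u, i + 1)} : Finset (V × ZMod 2)) := by
    rw [Finset.disjoint_singleton_right, Finset.mem_filter]
    rintro ⟨-, h⟩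
    exact zero_not_mem (by rwa [sub_self] at h)
  rw [SimpleGraph.degree, hnf, he, Finset.card_union_of_disjoint hdisj,
    card_fst (fun x => r u - x ∈ S2), card_slice, Finset.card_singleton]

set_option maxRecDepth 40000 in
lemma common_card_eq (p q : V × ZMod 2) :
    Fintype.card (Δ₂.commonNeighbors p q)
      = (Finset.univ.filter fun w => Δ₂.Adj p w ∧ Δ₂.Adj q w).card := by
  rw [← Set.toFinset_card]
  congr 1
  ext w
  simp [SimpleGraph.mem_commonNeighbors]

set_option maxRecDepth 40000 in
lemma common (u v : V) (i j : ZMod 2) (h : (u, i) ≠ (v, j)) :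
    Fintype.card (Δ₂.commonNeighbors (u, i) (v, j)) = if u = v then 44 else 4 := by
  rw [common_card_eq]
  by_cases huv : u = v
  · subst huv
    have hij : i ≠ j := fun e => h (by rw [e])
    rw [if_pos rfl]
    have he : (Finset.univ.filter fun w : V × ZMod 2 => Δ₂.Adj (u, i) w ∧ Δ₂.Adj (u, j) w)
        = Finset.univ.filter fun w : V × ZMod 2 => r u - w.1 ∈ S2 := by
      ext ⟨w, k⟩
      simp only [Finset.mem_filter, Finset.mem_univ, true_and, adj_iff]
      constructor
      · rintro ⟨h1 | ⟨e1, hik⟩, h2 | ⟨e2, hjk⟩⟩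
        · exact h1
        · exact h1
        · exact h2
        · exact absurd ⟨hik, hjk⟩ (zmod2_trich hij)
      · intro hA
        exact ⟨Or.inl hA, Or.inl hA⟩
    rw [he, card_fst (fun x => r u - x ∈ S2), card_slice]
  · rw [if_neg huv]
    have hab : r u ≠ r v := fun e => huv (by rw [← r_r u, e, r_r])
    have hFa : ∀ w : V, r u = w → r u - w ∈ S2 → False := by
      rintro w rfl hmem
      exact zero_not_mem (by rwa [sub_self] at hmem)
    have hFb : ∀ w : V, r v = w → r v - w ∈ S2 → False := by
      rintro w rfl hmem
      exact zero_not_mem (by rwa [sub_self] at hmem)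
    by_cases hd : r u - r v ∈ S2
    · have hd' : r v - r u ∈ S2 := by
        rw [← neg_sub]; exact S2_neg _ hd
      have he : (Finset.univ.filter fun w : V × ZMod 2 => Δ₂.Adj (u, i) w ∧ Δ₂.Adj (v, j) w)
          = (Finset.univ.filter fun w : V × ZMod 2 => r u - w.1 ∈ S2 ∧ r v - w.1 ∈ S2)
            ∪ {(r u, i + 1), (r v, j + 1)} := by
        ext ⟨w, k⟩
        simp only [Finset.mem_filter, Finset.mem_univ, true_and, adj_iff, Finset.mem_union,
          Finset.mem_insert, Finset.mem_singleton, Prod.mk.injEq]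
        constructor
        · rintro ⟨h1 | ⟨e1, hik⟩, h2 | ⟨e2, hjk⟩⟩
          · exact Or.inl ⟨h1, h2⟩
          · exact Or.inr (Or.inr ⟨e2.symm, zmod2_ne_iff.mp hjk⟩)
          · exact Or.inr (Or.inl ⟨e1.symm, zmod2_ne_iff.mp hik⟩)
          · exact absurd (e1.trans e2.symm) hab
        · rintro (⟨h1, h2⟩ | ⟨hw, hk⟩ | ⟨hw, hk⟩)
          · exact ⟨Or.inl h1, Or.inl h2⟩
          · subst hw
            exact ⟨Or.inr ⟨rfl, zmod2_ne_iff.mpr hk⟩, Or.inl hd'⟩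
          · subst hw
            exact ⟨Or.inl hd, Or.inr ⟨rfl, zmod2_ne_iff.mpr hk⟩⟩
      have hdisj : Disjoint
          (Finset.univ.filter fun w : V × ZMod 2 => r u - w.1 ∈ S2 ∧ r v - w.1 ∈ S2)
          ({(r u, i + 1), (r v, j + 1)} : Finset (V × ZMod 2)) := by
        rw [Finset.disjoint_right]
        intro ⟨w, k⟩ hwk hmem
        simp only [Finset.mem_insert, Finset.mem_singleton, Prod.mk.injEq] at hwk
        simp only [Finset.mem_filter, Finset.mem_univ, true_and] at hmem
        rcases hwk with ⟨hw, -⟩ | ⟨hw, -⟩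
        · exact hFa w hw.symm hmem.1
        · exact hFb w hw.symm hmem.2
      have hpair : ({(r u, i + 1), (r v, j + 1)} : Finset (V × ZMod 2)).card = 2 :=
        Finset.card_pair (by simp only [ne_eq, Prod.mk.injEq, not_and]; intro hc; exact absurd hc hab)
      rw [he, Finset.card_union_of_disjoint hdisj,
        card_fst (fun x => r u - x ∈ S2 ∧ r v - x ∈ S2), card_pair _ _ hab, if_pos hd, hpair]
    · have hd' : r v - r u ∉ S2 := fun hh => hd (by rw [← neg_sub]; exact S2_neg _ hh)
      have he : (Finset.univ.filter fun w : V × ZMod 2 => Δ₂.Adj (u, i) w ∧ Δ₂.Adj (v, j) w)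
          = Finset.univ.filter fun w : V × ZMod 2 => r u - w.1 ∈ S2 ∧ r v - w.1 ∈ S2 := by
        ext ⟨w, k⟩
        simp only [Finset.mem_filter, Finset.mem_univ, true_and, adj_iff]
        constructor
        · rintro ⟨h1 | ⟨e1, hik⟩, h2 | ⟨e2, hjk⟩⟩
          · exact ⟨h1, h2⟩
          · exact absurd (by rwa [← e2] at h1) hd
          · exact absurd (by rwa [← e1] at h2) hd'
          · exact absurd (e1.trans e2.symm) hab
        · rintro ⟨h1, h2⟩
          exact ⟨Or.inl h1, Or.inl h2⟩
      rw [he, card_fst (fun x => r u - x ∈ S2 ∧ r v - x ∈ S2), card_pair _ _ hab, if_neg hd]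

lemma edist_le_two : ∀ p q : V × ZMod 2, Δ₂.edist p q ≤ 2 := by
  intro p q
  by_cases hpq : p = q
  · subst hpq; rw [SimpleGraph.edist_self]; exact zero_le
  · by_cases hadj : Δ₂.Adj p q
    · rw [SimpleGraph.edist_eq_one_iff_adj.mpr hadj]; exact one_le_two
    · obtain ⟨u, i⟩ := p; obtain ⟨v, j⟩ := q
      have hc := common u v i j hpq
      have hpos : 0 < Fintype.card (Δ₂.commonNeighbors (u, i) (v, j)) := by
        rw [hc]; split <;> norm_num
      obtain ⟨⟨w, hw⟩⟩ := Fintype.card_pos_iff.mp hpos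
      rw [SimpleGraph.mem_commonNeighbors] at hw
      calc Δ₂.edist (u, i) (v, j)
          ≤ Δ₂.edist (u, i) w + Δ₂.edist w (v, j) := SimpleGraph.edist_triangle
        _ ≤ 1 + 1 := by
            rw [SimpleGraph.edist_eq_one_iff_adj.mpr hw.1,
              SimpleGraph.edist_eq_one_iff_adj.mpr hw.2.symm]
        _ = 2 := by norm_num

def q0 : V := ![1, 1, 0, 0, 0]

set_option maxRecDepth 40000 in
lemma hne0 : ((0 : V), (0 : ZMod 2)) ≠ (q0, 0) := by decide

set_option maxRecDepth 40000 in
lemma hnadj0 : ¬ Δ₂.Adj ((0 : V), 0) (q0, 0) := by decide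

lemma ediam_eq : Δ₂.ediam = 2 := by
  have hub : Δ₂.ediam ≤ 2 := SimpleGraph.ediam_le_of_edist_le edist_le_two
  have h2 : Δ₂.edist ((0 : V), (0 : ZMod 2)) (q0, 0) = 2 := by
    have hle := edist_le_two ((0 : V), (0 : ZMod 2)) (q0, 0)
    have h0 : Δ₂.edist ((0 : V), (0 : ZMod 2)) (q0, 0) ≠ 0 :=
      fun e => hne0 (SimpleGraph.edist_eq_zero_iff.mp e)
    have h1 : Δ₂.edist ((0 : V), (0 : ZMod 2)) (q0, 0) ≠ 1 :=
      fun e => hnadj0 (SimpleGraph.edist_eq_one_iff_adj.mp e)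
    generalize hx : Δ₂.edist ((0 : V), (0 : ZMod 2)) (q0, 0) = x at hle h0 h1
    induction x using ENat.recTopCoe with
    | top => exact absurd hle (by simp)
    | coe n =>
      norm_cast at hle h0 h1 ⊢
      omega
  exact le_antisymm hub (h2 ▸ SimpleGraph.edist_le_ediam)

lemma diam_eq : Δ₂.diam = 2 := by
  show Δ₂.ediam.toNat = 2
  rw [ediam_eq]; rfl


set_option maxRecDepth 40000 in
/-- The relation defining `Δ₂` is symmetric and irreflexive (so `Δ₂` is a well-defined simple
graph), and `Δ₂` is a strictly Deza graph with parameters `(486, 45, 44, 4)`: it has 486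
vertices, is 45-regular, any two distinct vertices have exactly 44 or exactly 4 common
neighbours, it has diameter 2, and it is not strongly regular. -/
theorem delta2_is_strictly_deza :
    (∀ p q : V × ZMod 2,
      ((r p.1, p.2) ≠ q ∧ (r p.1 = q.1 ∨ Γ.Adj (r p.1) q.1)) →
      ((r q.1, q.2) ≠ p ∧ (r q.1 = p.1 ∨ Γ.Adj (r q.1) p.1))) ∧
    (∀ p : V × ZMod 2, ¬ ((r p.1, p.2) ≠ p ∧ (r p.1 = p.1 ∨ Γ.Adj (r p.1) p.1))) ∧
    Fintype.card (V × ZMod 2) = 486 ∧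
    Δ₂.IsRegularOfDegree 45 ∧
    (∀ p q : V × ZMod 2, p ≠ q →
      Fintype.card (Δ₂.commonNeighbors p q) = 44 ∨
      Fintype.card (Δ₂.commonNeighbors p q) = 4) ∧
    Δ₂.diam = 2 ∧
    ¬ ∃ ℓ μ : ℕ, Δ₂.IsSRGWith 486 45 ℓ μ := by
  refine ⟨fun p q h => Δ₂.symm.symm p q h, fun p h => Δ₂.loopless.irrefl p h, ?_, ?_, ?_, diam_eq, ?_⟩
  · simp [Fintype.card_fun]
  · intro p
    obtain ⟨u, i⟩ := p
    exact deg u i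
  · intro p q hne
    obtain ⟨u, i⟩ := p; obtain ⟨v, j⟩ := q
    rw [common u v i j hne]
    by_cases h : u = v
    · exact Or.inl (by rw [if_pos h])
    · exact Or.inr (by rw [if_neg h])
  · rintro ⟨ℓ, μ, hsrg⟩
    have h1 : Δ₂.Adj ((0 : V), 0) ((0 : V), 1) := by decide
    have h2 : Δ₂.Adj ((0 : V), 0) (gen (6, true), 0) := by decide
    have e1 := hsrg.of_adj _ _ h1
    have e2 := hsrg.of_adj _ _ h2
    rw [common 0 0 0 1 (by decide), if_pos rfl] at e1
    rw [common 0 (gen (6, true)) 0 0 (by decide), if_neg (by decide)] at e2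
    omega
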